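/- Let D be a principal ideal domain, p ∈ D a prime element, A an n×n matrix over D, ℓ ≥ 1, and let ν_j be (p^j)-minimal polynomials of A for 1 ≤ j ≤ ℓ. If f ∈ N_{(p^ℓ)}(A) and deg(f) < deg(ν_j), then f ∈ p^{ℓ-(j-1)}·D[X]. In particular, if deg(ν_ℓ) = deg(ν_j), then N_{(p^ℓ)}(A) = ν_ℓ·D[X] + p^{ℓ-(j-1)}·N_{(p^{j-1})}(A). -/

import Mathlib

/-- `f(A) ∈ d·M_n(D)`, i.e. `f` belongs to the `(d)`-ideal `N_{(d)}(A)` of the matrix `A`. -/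
def memNullDvd {D : Type*} [CommRing D] {n : ℕ} (A : Matrix (Fin n) (Fin n) D) (d : D)
    (f : Polynomial D) : Prop :=
  ∃ B : Matrix (Fin n) (Fin n) D, Polynomial.aeval A f = d • B

/-- `f` is a `(d)`-minimal polynomial of `A`: a monic polynomial in `N_{(d)}(A)` of minimal
degree among monic polynomials in `N_{(d)}(A)`. -/
def IsMinPolyMod {D : Type*} [CommRing D] {n : ℕ} (A : Matrix (Fin n) (Fin n) D) (d : D)
    (f : Polynomial D) : Prop :=
  f.Monic ∧ memNullDvd A d f ∧
    ∀ g : Polynomial D, g.Monic → memNullDvd A d g → f.degree ≤ g.degree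

open Polynomial

section Aux

variable {D : Type*} [CommRing D] {n : ℕ} {A : Matrix (Fin n) (Fin n) D}

lemma memNullDvd.add {d : D} {f g : Polynomial D} (hf : memNullDvd A d f)
    (hg : memNullDvd A d g) : memNullDvd A d (f + g) := by
  obtain ⟨B, hB⟩ := hf; obtain ⟨B', hB'⟩ := hg
  exact ⟨B + B', by rw [map_add, hB, hB', smul_add]⟩

lemma memNullDvd.sub {d : D} {f g : Polynomial D} (hf : memNullDvd A d f)
    (hg : memNullDvd A d g) : memNullDvd A d (f - g) := by
  obtain ⟨B, hB⟩ := hf; obtain ⟨B', hB'⟩ := hg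
  exact ⟨B - B', by rw [map_sub, hB, hB', smul_sub]⟩

lemma memNullDvd.mul_left {d : D} (g : Polynomial D) {f : Polynomial D}
    (hf : memNullDvd A d f) : memNullDvd A d (g * f) := by
  obtain ⟨B, hB⟩ := hf
  exact ⟨Polynomial.aeval A g * B, by rw [map_mul, hB, Matrix.mul_smul]⟩

lemma memNullDvd.mul_right {d : D} {f : Polynomial D}
    (hf : memNullDvd A d f) (g : Polynomial D) : memNullDvd A d (f * g) := by
  rw [mul_comm]; exact hf.mul_left g

lemma memNullDvd.mono {d e : D} (h : d ∣ e) {f : Polynomial D}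
    (hf : memNullDvd A e f) : memNullDvd A d f := by
  obtain ⟨c, rfl⟩ := h; obtain ⟨B, hB⟩ := hf
  exact ⟨c • B, by rw [hB, smul_smul]⟩

lemma memNullDvd.C_mul {d : D} (c : D) {f : Polynomial D} (hf : memNullDvd A d f) :
    memNullDvd A (c * d) (Polynomial.C c * f) := by
  obtain ⟨B, hB⟩ := hf
  exact ⟨B, by rw [map_mul, aeval_C, hB, ← Algebra.smul_def, smul_smul]⟩

lemma mem_C_X_pow {d c : D} (h : d ∣ c) (m : ℕ) :
    memNullDvd A d (Polynomial.C c * X ^ m) := by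
  obtain ⟨e, rfl⟩ := h
  refine ⟨e • A ^ m, ?_⟩
  rw [map_mul, aeval_C, map_pow, aeval_X, ← Algebra.smul_def, mul_smul]

end Aux

section Core

variable {D : Type*} [CommRing D] [IsDomain D] [IsPrincipalIdealRing D]
  {p : D} {ℓ n : ℕ} {A : Matrix (Fin n) (Fin n) D} {ν : ℕ → Polynomial D}

lemma cancel_p (hp0 : p ≠ 0) {i : ℕ} (hi : 1 ≤ i)
    {f g : Polynomial D} (hf : memNullDvd A (p ^ i) f) (hfg : f = Polynomial.C p * g) :
    memNullDvd A (p ^ (i - 1)) g := by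
  obtain ⟨B, hB⟩ := hf
  refine ⟨B, ?_⟩
  have key : p • (Polynomial.aeval A g) = p • ((p ^ (i - 1)) • B) := by
    rw [smul_smul, ← pow_succ', show i - 1 + 1 = i from by omega, ← hB, hfg, map_mul,
      aeval_C, ← Algebra.smul_def]
  ext r c
  have h2 : (p • Polynomial.aeval A g) r c = (p • ((p ^ (i - 1)) • B)) r c := by rw [key]
  simp only [Matrix.smul_apply, smul_eq_mul] at h2
  simpa [Matrix.smul_apply, smul_eq_mul] using mul_left_cancel₀ hp0 h2

lemma core (hp : Prime p) (hν : ∀ i, 1 ≤ i → i ≤ ℓ → IsMinPolyMod A (p ^ i) (ν i)) :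
    ∀ i, 1 ≤ i → i ≤ ℓ → ∀ m (f : Polynomial D), f.natDegree ≤ m →
      memNullDvd A (p ^ i) f → f.degree < (ν i).degree →
      ∃ g, f = Polynomial.C p * g := by
  intro i
  induction i with
  | zero => omega
  | succ i ih =>
    intro _ hiℓ m
    induction m using Nat.strong_induction_on with
    | _ m ihm =>
      intro f hfm hfN hfdeg
      rcases eq_or_ne f 0 with rfl | hf0
      · exact ⟨0, by simp⟩
      set a := f.leadingCoeff with ha
      have ha0 : a ≠ 0 := leadingCoeff_ne_zero.mpr hf0
      by_cases hpa : p ∣ a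
      · -- p divides the leading coefficient
        obtain ⟨b, hb⟩ := hpa
        -- the common subtraction step
        have hsub : ∀ w : Polynomial D, w.Monic → memNullDvd A (p ^ i) w →
            w.degree ≤ f.degree → ∃ g, f = Polynomial.C p * g := by
          intro w hwmonic hwmem hwdeg
          set k := f.natDegree - w.natDegree with hk
          set s : Polynomial D := Polynomial.C a * (w * X ^ k) with hs
          have hwn : w.natDegree ≤ f.natDegree := natDegree_le_natDegree hwdeg
          have hwx : (w * X ^ k).Monic := hwmonic.mul (monic_X_pow k)
          have hsnat : s.natDegree = f.natDegree := by
            rw [hs, natDegree_C_mul ha0,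
              natDegree_mul hwmonic.ne_zero (pow_ne_zero _ X_ne_zero), natDegree_X_pow]
            omega
          have hs0 : s ≠ 0 := mul_ne_zero (C_ne_zero.mpr ha0) hwx.ne_zero
          have hsdeg : f.degree = s.degree := by
            rw [degree_eq_natDegree hs0, degree_eq_natDegree hf0, hsnat]
          have hslc : f.leadingCoeff = s.leadingCoeff := by
            rw [hs, leadingCoeff_mul, leadingCoeff_C, hwx.leadingCoeff, mul_one, ← ha]
          have hsmem : memNullDvd A (p ^ (i + 1)) s := by
            refine memNullDvd.mono ⟨b, ?_⟩ ((hwmem.mul_right (X ^ k)).C_mul a)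
            rw [hb, pow_succ']; ring
          set g0 : Polynomial D := f - s with hg0
          have hg0deg : g0.degree < f.degree := degree_sub_lt hsdeg hf0 hslc
          have hg0mem : memNullDvd A (p ^ (i + 1)) g0 := hfN.sub hsmem
          have hfs : f = s + g0 := by rw [hg0]; ring
          rcases eq_or_ne g0 0 with hg00 | hg00
          · refine ⟨Polynomial.C b * (w * X ^ k), ?_⟩
            rw [hfs, hg00, add_zero, hs, hb, Polynomial.C_mul, mul_assoc]
          · have hlt : g0.natDegree < f.natDegree := natDegree_lt_natDegree hg00 hg0deg
            obtain ⟨g, hg⟩ := ihm g0.natDegree (lt_of_lt_of_le hlt hfm) g0 le_rfl hg0mem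
              (lt_trans hg0deg hfdeg)
            refine ⟨Polynomial.C b * (w * X ^ k) + g, ?_⟩
            rw [hfs, hg, hs, hb, mul_add, Polynomial.C_mul, mul_assoc]
        rcases Nat.eq_zero_or_pos i with hi0 | hi1
        · subst hi0
          refine hsub 1 monic_one ⟨1, by simp⟩ ?_
          rw [degree_one]
          exact zero_le_degree_iff.mpr hf0
        · by_cases hcase : f.degree < (ν i).degree
          · exact ih hi1 (by omega) f.natDegree f le_rfl
              (hfN.mono (pow_dvd_pow p (by omega))) hcase
          · exact hsub (ν i) (hν i hi1 (by omega)).1 (hν i hi1 (by omega)).2.1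
              (not_lt.mp hcase)
      · -- p does not divide the leading coefficient : contradiction with minimality
        exfalso
        have hco : IsCoprime (p ^ (i + 1)) a := ((hp.coprime_iff_not_dvd).mpr hpa).pow_left
        obtain ⟨u, v, huv⟩ := hco
        set g : Polynomial D := Polynomial.C (u * p ^ (i + 1)) * X ^ f.natDegree
          + Polynomial.C v * f with hg
        have hgN : memNullDvd A (p ^ (i + 1)) g :=
          (mem_C_X_pow (dvd_mul_left _ _) _).add ((hfN.mul_left (Polynomial.C v)))
        have hgc : g.coeff f.natDegree = 1 := by
          rw [hg, coeff_add, coeff_C_mul, coeff_C_mul, coeff_X_pow, if_pos rfl, mul_one,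
            coeff_natDegree, ← ha, huv]
        have hgnat : g.natDegree ≤ f.natDegree := by
          refine le_trans (natDegree_add_le _ _) (max_le ?_ (natDegree_C_mul_le _ _))
          exact le_trans (natDegree_C_mul_le _ _) (by rw [natDegree_X_pow])
        have hgmonic : g.Monic := monic_of_natDegree_le_of_coeff_eq_one _ hgnat hgc
        have hgdeg : g.degree = f.degree := by
          rw [degree_eq_natDegree hgmonic.ne_zero, degree_eq_natDegree hf0]
          exact_mod_cast le_antisymm hgnat (le_natDegree_of_ne_zero (hgc ▸ one_ne_zero))
        have hmin := (hν (i + 1) (by omega) hiℓ).2.2 g hgmonic hgN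
        rw [hgdeg] at hmin
        exact absurd hfdeg (not_lt.mpr hmin)

end Core

section Main

variable {D : Type*} [CommRing D] [IsDomain D] [IsPrincipalIdealRing D]
  {p : D} {ℓ n : ℕ} {A : Matrix (Fin n) (Fin n) D} {ν : ℕ → Polynomial D}

lemma main1 (hp : Prime p) (hν : ∀ i, 1 ≤ i → i ≤ ℓ → IsMinPolyMod A (p ^ i) (ν i))
    {j : ℕ} (hj1 : 1 ≤ j) :
    ∀ k, j - 1 + k ≤ ℓ → ∀ f : Polynomial D, memNullDvd A (p ^ (j - 1 + k)) f →
      f.degree < (ν j).degree →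
      ∃ h, memNullDvd A (p ^ (j - 1)) h ∧ f = Polynomial.C (p ^ k) * h := by
  intro k
  induction k with
  | zero => intro _ f hf _; exact ⟨f, hf, by simp⟩
  | succ k ih =>
    intro hk f hf hdeg
    have hi1 : 1 ≤ j - 1 + (k + 1) := by omega
    have hνi := hν (j - 1 + (k + 1)) hi1 hk
    have hνj := hν j hj1 (by omega)
    have hd2 : (ν j).degree ≤ (ν (j - 1 + (k + 1))).degree :=
      hνj.2.2 _ hνi.1 (hνi.2.1.mono (pow_dvd_pow p (by omega)))
    obtain ⟨g, hg⟩ := core hp hν _ hi1 hk f.natDegree f le_rfl hf (lt_of_lt_of_le hdeg hd2)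
    have hgmem : memNullDvd A (p ^ (j - 1 + (k + 1) - 1)) g := cancel_p hp.ne_zero hi1 hf hg
    have hgmem' : memNullDvd A (p ^ (j - 1 + k)) g := by
      rwa [show j - 1 + (k + 1) - 1 = j - 1 + k from by omega] at hgmem
    have hgdeg : g.degree < (ν j).degree := by
      have hd : g.degree = f.degree := by rw [hg, degree_C_mul hp.ne_zero]
      rwa [hd]
    obtain ⟨h, hh1, hh2⟩ := ih (by omega) g hgmem' hgdeg
    exact ⟨h, hh1, by rw [hg, hh2, ← mul_assoc, ← Polynomial.C_mul, ← pow_succ']⟩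

end Main

/-- Let `p` be prime, `1 ≤ j ≤ ℓ` and `ν_i` `(p^i)`-minimal polynomials of `A`
for `1 ≤ i ≤ ℓ`. If `f ∈ N_{(p^ℓ)}(A)` and `deg f < deg ν_j`, then `f ∈ p^{ℓ-(j-1)}·D[X]`.
In particular, if `deg ν_ℓ = deg ν_j`, then
`N_{(p^ℓ)}(A) = ν_ℓ·D[X] + p^{ℓ-(j-1)}·N_{(p^{j-1})}(A)`. -/
theorem stmt4 {D : Type*} [CommRing D] [IsDomain D] [IsPrincipalIdealRing D]
    (p : D) (hp : Prime p) (ℓ : ℕ) (hℓ : 1 ≤ ℓ)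
    {n : ℕ} (A : Matrix (Fin n) (Fin n) D)
    (ν : ℕ → Polynomial D) (hν : ∀ i, 1 ≤ i → i ≤ ℓ → IsMinPolyMod A (p ^ i) (ν i))
    (j : ℕ) (hj1 : 1 ≤ j) (hjℓ : j ≤ ℓ) :
    (∀ f : Polynomial D, memNullDvd A (p ^ ℓ) f → f.degree < (ν j).degree →
      ∃ h : Polynomial D, f = Polynomial.C (p ^ (ℓ - (j - 1))) * h) ∧
    ((ν ℓ).degree = (ν j).degree →
      ∀ f : Polynomial D, memNullDvd A (p ^ ℓ) f ↔
        ∃ q h : Polynomial D, memNullDvd A (p ^ (j - 1)) h ∧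
          f = q * ν ℓ + Polynomial.C (p ^ (ℓ - (j - 1))) * h) := by
  have hνℓ := hν ℓ hℓ le_rfl
  have hmain : ∀ f : Polynomial D, memNullDvd A (p ^ ℓ) f → f.degree < (ν j).degree →
      ∃ h, memNullDvd A (p ^ (j - 1)) h ∧ f = Polynomial.C (p ^ (ℓ - (j - 1))) * h := by
    intro f hf hdeg
    refine main1 hp hν hj1 (ℓ - (j - 1)) (by omega) f ?_ hdeg
    rwa [show j - 1 + (ℓ - (j - 1)) = ℓ from by omega]
  refine ⟨fun f hf hdeg => (hmain f hf hdeg).imp (fun h hh => hh.2), fun hdegeq f => ?_⟩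
  constructor
  · intro hf
    set q := f /ₘ (ν ℓ) with hq
    set r := f %ₘ (ν ℓ) with hr
    have hfr : r + ν ℓ * q = f := Polynomial.modByMonic_add_div f (ν ℓ)
    have hrmem : memNullDvd A (p ^ ℓ) r := by
      have hrr : r = f - ν ℓ * q := by rw [← hfr]; ring
      rw [hrr]; exact hf.sub (hνℓ.2.1.mul_right q)
    have hrdeg : r.degree < (ν j).degree := hdegeq ▸ Polynomial.degree_modByMonic_lt f hνℓ.1
    obtain ⟨h, hh1, hh2⟩ := hmain r hrmem hrdeg
    exact ⟨q, h, hh1, by rw [← hfr, hh2]; ring⟩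
  · rintro ⟨q, h, hh, rfl⟩
    refine memNullDvd.add (hνℓ.2.1.mul_left q) (memNullDvd.mono ?_ (hh.C_mul _))
    exact ⟨1, by rw [mul_one, ← pow_add, show ℓ - (j - 1) + (j - 1) = ℓ from by omega]⟩
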